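/- Let Re > 0 and let θ : ℝ × ℝ → ℝ be twice continuously differentiable on an open set U ⊆ ℝ × ℝ with θ(x,t) > 0 on U, and suppose θ satisfies the heat equation ∂θ/∂t = (1/Re) ∂²θ/∂x² on U. Then the function u(x,t) = -(2/Re) · (∂θ/∂x)(x,t) / θ(x,t) satisfies the viscous Burgers equation ∂u/∂t + u ∂u/∂x = (1/Re) ∂²u/∂x² at every point of U. -/

import Mathlib

open Real

/-- **Cole–Hopf transformation.** If `θ` is a positive `C²` solution of the heat
equation `θ_t = (1/Re) θ_xx` on an open set `U ⊆ ℝ × ℝ`, then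
`u = -(2/Re) θ_x / θ` solves the viscous Burgers equation
`u_t + u u_x = (1/Re) u_xx` on `U`. -/
theorem cole_hopf_transform (Re : ℝ) (hRe : 0 < Re)
    (U : Set (ℝ × ℝ)) (hU : IsOpen U)
    (θ : ℝ × ℝ → ℝ) (hθ : ContDiffOn ℝ 2 θ U)
    (hpos : ∀ p ∈ U, 0 < θ p)
    (hheat : ∀ p ∈ U,
      deriv (fun t => θ (p.1, t)) p.2
        = (1 / Re) * deriv (deriv (fun x => θ (x, p.2))) p.1) :
    ∀ p ∈ U,
      (fun q : ℝ × ℝ => deriv (fun t =>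
          -(2 / Re) * deriv (fun x => θ (x, t)) q.1 / θ (q.1, t)) q.2) p
      + (-(2 / Re) * deriv (fun x => θ (x, p.2)) p.1 / θ p)
        * deriv (fun x => -(2 / Re) * deriv (fun y => θ (y, p.2)) x / θ (x, p.2)) p.1
      = (1 / Re)
        * deriv (deriv (fun x =>
            -(2 / Re) * deriv (fun y => θ (y, p.2)) x / θ (x, p.2))) p.1 := by
  have hRe' : Re ≠ 0 := hRe.ne'
  -- ContDiffAt at each point of U
  have hCD : ∀ q ∈ U, ContDiffAt ℝ 2 θ q := fun q hq => (hθ q hq).contDiffAt (hU.mem_nhds hq)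
  have hθdiff : ∀ q ∈ U, HasFDerivAt θ (fderiv ℝ θ q) q := fun q hq =>
    ((hCD q hq).differentiableAt (by norm_num)).hasFDerivAt
  have hDdiff : ∀ q ∈ U, HasFDerivAt (fderiv ℝ θ) (fderiv ℝ (fderiv ℝ θ) q) q := fun q hq =>
    (((hCD q hq).fderiv_right (m := 1) (by norm_num)).differentiableAt one_ne_zero).hasFDerivAt
  -- line maps
  have hlineX : ∀ (x t : ℝ), HasDerivAt (fun y : ℝ => (y, t)) ((1:ℝ), (0:ℝ)) x := fun x t =>
    (hasDerivAt_id x).prodMk (hasDerivAt_const x t)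
  have hlineT : ∀ (x t : ℝ), HasDerivAt (fun s : ℝ => (x, s)) ((0:ℝ), (1:ℝ)) t := fun x t =>
    (hasDerivAt_const t x).prodMk (hasDerivAt_id t)
  -- partial derivatives of θ
  have hA : ∀ x t, (x, t) ∈ U →
      HasDerivAt (fun y => θ (y, t)) (fderiv ℝ θ (x, t) (1, 0)) x := by
    intro x t h
    exact (hθdiff (x, t) h).comp_hasDerivAt x (hlineX x t)
  have hB : ∀ x t, (x, t) ∈ U →
      HasDerivAt (fun s => θ (x, s)) (fderiv ℝ θ (x, t) (0, 1)) t := by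
    intro x t h
    exact (hθdiff (x, t) h).comp_hasDerivAt t (hlineT x t)
  -- partial derivatives of the partial derivatives
  have hAx : ∀ x t, (x, t) ∈ U →
      HasDerivAt (fun y => fderiv ℝ θ (y, t) (1, 0))
        (fderiv ℝ (fderiv ℝ θ) (x, t) (1, 0) (1, 0)) x := by
    intro x t h
    have h2 := (hDdiff (x, t) h).comp_hasDerivAt x (hlineX x t)
    simpa using h2.clm_apply (hasDerivAt_const x ((1:ℝ), (0:ℝ)))
  have hAt : ∀ x t, (x, t) ∈ U →
      HasDerivAt (fun s => fderiv ℝ θ (x, s) (1, 0))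
        (fderiv ℝ (fderiv ℝ θ) (x, t) (0, 1) (1, 0)) t := by
    intro x t h
    have h2 := (hDdiff (x, t) h).comp_hasDerivAt t (hlineT x t)
    simpa using h2.clm_apply (hasDerivAt_const t ((1:ℝ), (0:ℝ)))
  have hBx : ∀ x t, (x, t) ∈ U →
      HasDerivAt (fun y => fderiv ℝ θ (y, t) (0, 1))
        (fderiv ℝ (fderiv ℝ θ) (x, t) (1, 0) (0, 1)) x := by
    intro x t h
    have h2 := (hDdiff (x, t) h).comp_hasDerivAt x (hlineX x t)
    simpa using h2.clm_apply (hasDerivAt_const x ((0:ℝ), (1:ℝ)))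
  -- horizontal slices of U are open
  have hopen : ∀ t : ℝ, IsOpen {y : ℝ | (y, t) ∈ U} := fun t =>
    hU.preimage (continuous_id.prodMk continuous_const)
  -- the x-derivative function agrees with the fderiv form near points of U
  have hevA : ∀ x t, (x, t) ∈ U →
      (deriv (fun y => θ (y, t))) =ᶠ[nhds x] (fun y => fderiv ℝ θ (y, t) (1, 0)) := by
    intro x t h
    filter_upwards [(hopen t).mem_nhds h] with y hy using (hA y t hy).deriv
  -- heat equation in fderiv form
  have hheat' : ∀ x t, (x, t) ∈ U →
      fderiv ℝ (fderiv ℝ θ) (x, t) (1, 0) (1, 0) = Re * fderiv ℝ θ (x, t) (0, 1) := by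
    intro x t h
    have hh : deriv (fun s => θ (x, s)) t = (1 / Re) * deriv (deriv (fun y => θ (y, t))) x :=
      hheat (x, t) h
    rw [(hB x t h).deriv, (hevA x t h).deriv_eq, (hAx x t h).deriv] at hh
    field_simp at hh
    linarith [hh]
  intro p hp
  have hp' : (p.1, p.2) ∈ U := hp
  have hPne : θ (p.1, p.2) ≠ 0 := (hpos _ hp').ne'
  -- eventual equality for the t-derivative term
  have hev1 : (fun t => -(2 / Re) * deriv (fun x => θ (x, t)) p.1 / θ (p.1, t))
      =ᶠ[nhds p.2] (fun t => -(2 / Re) * fderiv ℝ θ (p.1, t) (1, 0) / θ (p.1, t)) := by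
    have hc : ContinuousAt (fun t : ℝ => (p.1, t)) p.2 :=
      (continuous_const.prodMk continuous_id).continuousAt
    filter_upwards [hc.preimage_mem_nhds (hU.mem_nhds hp)] with t ht
    rw [(hA p.1 t ht).deriv]
  -- eventual equality for the x-derivative term
  have hev3 : (fun x => -(2 / Re) * deriv (fun y => θ (y, p.2)) x / θ (x, p.2))
      =ᶠ[nhds p.1] (fun x => -(2 / Re) * fderiv ℝ θ (x, p.2) (1, 0) / θ (x, p.2)) := by
    filter_upwards [(hopen p.2).mem_nhds hp'] with x hx
    rw [(hA x p.2 hx).deriv]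
  -- the first x-derivative of u, as a function, using the heat equation
  have hw : (deriv (fun x => -(2 / Re) * deriv (fun y => θ (y, p.2)) x / θ (x, p.2)))
      =ᶠ[nhds p.1] (fun x =>
        (-(2 / Re) * (Re * fderiv ℝ θ (x, p.2) (0, 1)) * θ (x, p.2)
          - -(2 / Re) * fderiv ℝ θ (x, p.2) (1, 0) * fderiv ℝ θ (x, p.2) (1, 0))
        / θ (x, p.2) ^ 2) := by
    filter_upwards [(hopen p.2).mem_nhds hp'] with x hx
    have e1 : (fun x' => -(2 / Re) * deriv (fun y => θ (y, p.2)) x' / θ (x', p.2))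
        =ᶠ[nhds x] (fun x' => -(2 / Re) * fderiv ℝ θ (x', p.2) (1, 0) / θ (x', p.2)) := by
      filter_upwards [(hopen p.2).mem_nhds hx] with y hy
      rw [(hA y p.2 hy).deriv]
    have hval := (((hAx x p.2 hx).const_mul (-(2 / Re))).fun_div (hA x p.2 hx)
      (hpos _ hx).ne').deriv
    rw [e1.deriv_eq, hval, hheat' x p.2 hx]
  -- compute the three derivatives in the goal
  have h1 := (((hAt p.1 p.2 hp').const_mul (-(2 / Re))).fun_div (hB p.1 p.2 hp') hPne).deriv
  have h3 := (((hAx p.1 p.2 hp').const_mul (-(2 / Re))).fun_div (hA p.1 p.2 hp') hPne).deriv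
  have h4 := ((((((hBx p.1 p.2 hp').const_mul Re).const_mul (-(2 / Re))).fun_mul
      (hA p.1 p.2 hp')).fun_sub (((hAx p.1 p.2 hp').const_mul (-(2 / Re))).fun_mul
      (hAx p.1 p.2 hp'))).fun_div ((hA p.1 p.2 hp').fun_pow 2) (pow_ne_zero 2 hPne)).deriv
  beta_reduce
  rw [hev1.deriv_eq, hev3.deriv_eq, hw.deriv_eq, (hA p.1 p.2 hp').deriv, h1, h3, h4]
  have hsym := ((hCD p hp).isSymmSndFDerivAt (by norm_num)) ((0:ℝ), (1:ℝ)) ((1:ℝ), (0:ℝ))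
  have hBp := hheat' p.1 p.2 hp'
  simp only [Prod.mk.eta] at *
  rw [hsym, hBp]
  field_simp
  ring
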